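/- Let N_j(x,y) := 2^j φ₁(2^j x, 2^j y). For j < 0 and integers r, s with r,s ∈ {−2^{-j}+1, ..., 2^{-j}−1}, not both zero: ⟨T^t_{(r,s)} N_j, N_j⟩ = 0 if r = 0 or s = 0 or at least one of r,s is even; and if r ≥ 1 and s ≥ 1 both odd, ⟨T^t_{(r,s)} N_j, N_j⟩ = (2^{2j+1}/(π² r s))(1 − cos(π r s)); consequently |⟨T^t_{(r,s)} N_j, N_j⟩| ≤ 2^{2j+1}/π for all such (r,s). -/
import Mathlib

open MeasureTheory

noncomputable def tT (k l : ℤ) (φ : ℝ × ℝ → ℂ) : ℝ × ℝ → ℂ :=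
  fun p => Complex.exp (Real.pi * Complex.I * ((l : ℂ) * p.1 - (k : ℂ) * p.2)) *
    φ (p.1 - k, p.2 - l)

noncomputable def phi1 : ℝ × ℝ → ℂ :=
  fun p => if p.1 ∈ Set.Ico (0:ℝ) 1 ∧ p.2 ∈ Set.Ico (0:ℝ) 1 then 1 else 0

noncomputable def Nj (j : ℤ) : ℝ × ℝ → ℂ :=
  fun p => (2 : ℂ) ^ j * phi1 ((2 : ℝ) ^ j * p.1, (2 : ℝ) ^ j * p.2)

noncomputable def innerNj (j r s : ℤ) : ℂ :=
  ∫ p : ℝ × ℝ, tT r s (Nj j) p * (starRingEnd ℂ) (Nj j p)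

lemma exp_pi_I_int (m : ℤ) : Complex.exp (Real.pi * Complex.I * m) = (-1) ^ m := by
  rw [show ((Real.pi : ℂ) * Complex.I * m) = m * (Real.pi * Complex.I) by ring,
    Complex.exp_int_mul, Complex.exp_pi_mul_I]

lemma int_exp (c a b : ℤ) :
    (∫ x in (a:ℝ)..(b:ℝ), Complex.exp (Real.pi * Complex.I * c * x)) =
      if c = 0 then ((b - a : ℤ) : ℂ)
      else ((-1:ℂ)^(c*b) - (-1:ℂ)^(c*a)) / (Real.pi * Complex.I * c) := by
  split_ifs with hc
  · subst hc; push_cast; simp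
  · have hc' : (Real.pi : ℂ) * Complex.I * c ≠ 0 := by
      simp [Real.pi_ne_zero, Complex.I_ne_zero, hc]
    rw [integral_exp_mul_complex hc']
    have h1 : ∀ m : ℤ, (Real.pi : ℂ) * Complex.I * c * ((m:ℤ):ℝ) = Real.pi * Complex.I * ((c*m : ℤ) : ℂ) := by
      intro m; push_cast; ring
    rw [h1 a, h1 b, exp_pi_I_int, exp_pi_I_int]

lemma oneD (j : ℤ) (hj : j < 0) (k c : ℤ) (hk : |k| ≤ 2 ^ (-j).toNat - 1) :
    (∫ x : ℝ, Complex.exp (Real.pi * Complex.I * c * x) *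
      ((if (2:ℝ)^j * (x - k) ∈ Set.Ico (0:ℝ) 1 then (1:ℂ) else 0) *
       (if (2:ℝ)^j * x ∈ Set.Ico (0:ℝ) 1 then (1:ℂ) else 0)))
    = ∫ x in ((max k 0 : ℤ):ℝ)..((min ((2:ℤ)^(-j).toNat + k) ((2:ℤ)^(-j).toNat) : ℤ):ℝ),
        Complex.exp (Real.pi * Complex.I * c * x) := by
  set L : ℤ := (2:ℤ)^(-j).toNat with hLdef
  have hL0 : (0:ℤ) < L := by positivity
  have habs2 := abs_le.mp hk
  have h2 : (0:ℝ) < (2:ℝ)^j := by positivity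
  have hmul : (2:ℝ)^j * (L:ℝ) = 1 := by
    have : ((L:ℤ):ℝ) = (2:ℝ)^(-j) := by
      rw [hLdef]; push_cast
      rw [← zpow_natCast, Int.toNat_of_nonneg (by omega)]
    rw [this, ← zpow_add₀ (two_ne_zero), add_neg_cancel, zpow_zero]
  set A : ℝ := ((max k 0 : ℤ):ℝ) with hA
  set B : ℝ := ((min (L + k) L : ℤ):ℝ) with hB
  have hAB : A ≤ B := by
    rw [hA, hB]
    have : (max k 0 : ℤ) ≤ (min (L + k) L : ℤ) := by omega
    exact_mod_cast this
  have hiff : ∀ x:ℝ, ((2:ℝ)^j*(x-(k:ℝ)) ∈ Set.Ico (0:ℝ) 1 ∧ (2:ℝ)^j*x ∈ Set.Ico (0:ℝ) 1)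
      ↔ x ∈ Set.Ico A B := by
    intro x
    have e1 : ∀ u : ℝ, (2:ℝ)^j * u < 1 ↔ u < (L:ℝ) := by
      intro u; rw [← hmul, mul_lt_mul_iff_right₀ h2]
    have e2 : ∀ u : ℝ, (0:ℝ) ≤ (2:ℝ)^j * u ↔ 0 ≤ u := by
      intro u; exact mul_nonneg_iff_of_pos_left h2
    simp only [Set.mem_Ico, e1, e2, hA, hB]
    push_cast
    constructor
    · rintro ⟨⟨h1, h2⟩, h3, h4⟩
      constructor
      · exact max_le (by linarith) h3
      · exact lt_min (by linarith) h4
    · rintro ⟨h1, h2⟩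
      rw [max_le_iff] at h1; rw [lt_min_iff] at h2
      exact ⟨⟨by linarith [h1.1], by linarith [h2.1]⟩, h1.2, h2.2⟩
  calc (∫ x : ℝ, Complex.exp (Real.pi * Complex.I * c * x) *
      ((if (2:ℝ)^j * (x - k) ∈ Set.Ico (0:ℝ) 1 then (1:ℂ) else 0) *
       (if (2:ℝ)^j * x ∈ Set.Ico (0:ℝ) 1 then (1:ℂ) else 0)))
      = ∫ x : ℝ, Set.indicator (Set.Ico A B)
          (fun x : ℝ => Complex.exp (Real.pi * Complex.I * c * x)) x := by
        congr 1; funext x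
        by_cases hx : x ∈ Set.Ico A B
        · have := (hiff x).mpr hx
          simp [Set.indicator_of_mem hx, this.1, this.2]
        · have := (hiff x).not.mpr hx
          rw [Set.indicator_of_notMem hx]
          by_cases h1 : (2:ℝ)^j * (x - k) ∈ Set.Ico (0:ℝ) 1 <;>
            by_cases h2 : (2:ℝ)^j * x ∈ Set.Ico (0:ℝ) 1 <;>
            simp [h1, h2] at this ⊢
    _ = ∫ x in Set.Ico A B, Complex.exp (Real.pi * Complex.I * c * x) :=
        integral_indicator measurableSet_Ico
    _ = ∫ x in Set.Ioc A B, Complex.exp (Real.pi * Complex.I * c * x) := by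
        rw [integral_Ico_eq_integral_Ioo, integral_Ioc_eq_integral_Ioo]
    _ = ∫ x in A..B, Complex.exp (Real.pi * Complex.I * c * x) :=
        (intervalIntegral.integral_of_le hAB).symm

lemma factor (j r s : ℤ) :
    innerNj j r s =
      ((2:ℂ)^j * ∫ x : ℝ, Complex.exp (Real.pi * Complex.I * ((s:ℤ):ℂ) * x) *
        ((if (2:ℝ)^j * (x - ((r:ℤ):ℝ)) ∈ Set.Ico (0:ℝ) 1 then (1:ℂ) else 0) *
         (if (2:ℝ)^j * x ∈ Set.Ico (0:ℝ) 1 then (1:ℂ) else 0))) *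
      ((2:ℂ)^j * ∫ y : ℝ, Complex.exp (Real.pi * Complex.I * (((-r : ℤ)):ℂ) * y) *
        ((if (2:ℝ)^j * (y - ((s:ℤ):ℝ)) ∈ Set.Ico (0:ℝ) 1 then (1:ℂ) else 0) *
         (if (2:ℝ)^j * y ∈ Set.Ico (0:ℝ) 1 then (1:ℂ) else 0))) := by
  have key : ∀ p : ℝ × ℝ, tT r s (Nj j) p * (starRingEnd ℂ) (Nj j p) =
      ((2:ℂ)^j * (Complex.exp (Real.pi * Complex.I * ((s:ℤ):ℂ) * p.1) *
        ((if (2:ℝ)^j * (p.1 - ((r:ℤ):ℝ)) ∈ Set.Ico (0:ℝ) 1 then (1:ℂ) else 0) *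
         (if (2:ℝ)^j * p.1 ∈ Set.Ico (0:ℝ) 1 then (1:ℂ) else 0)))) *
      ((2:ℂ)^j * (Complex.exp (Real.pi * Complex.I * (((-r : ℤ)):ℂ) * p.2) *
        ((if (2:ℝ)^j * (p.2 - ((s:ℤ):ℝ)) ∈ Set.Ico (0:ℝ) 1 then (1:ℂ) else 0) *
         (if (2:ℝ)^j * p.2 ∈ Set.Ico (0:ℝ) 1 then (1:ℂ) else 0)))) := by
    rintro ⟨x, y⟩
    have hconj2 : (starRingEnd ℂ) ((2:ℂ)^j) = (2:ℂ)^j := by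
      rw [map_zpow₀]; norm_num [Complex.conj_ofNat]
    have hconjite : ∀ (a b : ℝ), (starRingEnd ℂ)
        (if a ∈ Set.Ico (0:ℝ) 1 ∧ b ∈ Set.Ico (0:ℝ) 1 then (1:ℂ) else 0) =
        if a ∈ Set.Ico (0:ℝ) 1 ∧ b ∈ Set.Ico (0:ℝ) 1 then (1:ℂ) else 0 := by
      intro a b; split_ifs <;> simp
    have hsplit : ∀ a b : ℝ, (if (a ∈ Set.Ico (0:ℝ) 1 ∧ b ∈ Set.Ico (0:ℝ) 1) then (1:ℂ) else 0) =
        (if a ∈ Set.Ico (0:ℝ) 1 then (1:ℂ) else 0) * (if b ∈ Set.Ico (0:ℝ) 1 then (1:ℂ) else 0) := by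
      intro a b; by_cases h1 : a ∈ Set.Ico (0:ℝ) 1 <;> by_cases h2 : b ∈ Set.Ico (0:ℝ) 1 <;>
        simp [h1, h2]
    have hexp : Complex.exp ((Real.pi:ℂ) * Complex.I * ((s : ℂ) * (x:ℝ) - (r : ℂ) * (y:ℝ)))
        = Complex.exp (Real.pi * Complex.I * ((s:ℤ):ℂ) * x) *
          Complex.exp (Real.pi * Complex.I * (((-r : ℤ)):ℂ) * y) := by
      rw [← Complex.exp_add]; congr 1; push_cast; ring
    simp only [tT, Nj, phi1]
    rw [map_mul, hconj2, hconjite, hsplit, hsplit, hexp]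
    ring
  have h1 : innerNj j r s = ∫ p : ℝ × ℝ,
      ((2:ℂ)^j * (Complex.exp (Real.pi * Complex.I * ((s:ℤ):ℂ) * p.1) *
        ((if (2:ℝ)^j * (p.1 - ((r:ℤ):ℝ)) ∈ Set.Ico (0:ℝ) 1 then (1:ℂ) else 0) *
         (if (2:ℝ)^j * p.1 ∈ Set.Ico (0:ℝ) 1 then (1:ℂ) else 0)))) *
      ((2:ℂ)^j * (Complex.exp (Real.pi * Complex.I * (((-r : ℤ)):ℂ) * p.2) *
        ((if (2:ℝ)^j * (p.2 - ((s:ℤ):ℝ)) ∈ Set.Ico (0:ℝ) 1 then (1:ℂ) else 0) *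
         (if (2:ℝ)^j * p.2 ∈ Set.Ico (0:ℝ) 1 then (1:ℂ) else 0)))) := by
    unfold innerNj; congr 1; funext p; exact key p
  rw [h1]
  rw [show (volume : Measure (ℝ × ℝ)) = (volume : Measure ℝ).prod volume from
    MeasureTheory.Measure.volume_eq_prod ℝ ℝ]
  rw [MeasureTheory.integral_prod_mul
    (f := fun x : ℝ => (2:ℂ)^j * (Complex.exp (Real.pi * Complex.I * ((s:ℤ):ℂ) * x) *
        ((if (2:ℝ)^j * (x - ((r:ℤ):ℝ)) ∈ Set.Ico (0:ℝ) 1 then (1:ℂ) else 0) *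
         (if (2:ℝ)^j * x ∈ Set.Ico (0:ℝ) 1 then (1:ℂ) else 0))))
    (g := fun y : ℝ => (2:ℂ)^j * (Complex.exp (Real.pi * Complex.I * (((-r : ℤ)):ℂ) * y) *
        ((if (2:ℝ)^j * (y - ((s:ℤ):ℝ)) ∈ Set.Ico (0:ℝ) 1 then (1:ℂ) else 0) *
         (if (2:ℝ)^j * y ∈ Set.Ico (0:ℝ) 1 then (1:ℂ) else 0))))]
  congr 1 <;> exact MeasureTheory.integral_const_mul _ _

lemma master (j r s : ℤ) (hj : j < 0)
    (hr : |r| ≤ 2 ^ (-j).toNat - 1) (hs : |s| ≤ 2 ^ (-j).toNat - 1) :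
    innerNj j r s =
      ((2:ℂ)^j * (if s = 0 then ((min ((2:ℤ)^(-j).toNat + r) ((2:ℤ)^(-j).toNat) - max r 0 : ℤ) : ℂ)
        else ((-1:ℂ)^(s * min ((2:ℤ)^(-j).toNat + r) ((2:ℤ)^(-j).toNat)) - (-1:ℂ)^(s * max r 0)) /
          (Real.pi * Complex.I * s))) *
      ((2:ℂ)^j * (if -r = 0 then ((min ((2:ℤ)^(-j).toNat + s) ((2:ℤ)^(-j).toNat) - max s 0 : ℤ) : ℂ)
        else ((-1:ℂ)^(-r * min ((2:ℤ)^(-j).toNat + s) ((2:ℤ)^(-j).toNat)) - (-1:ℂ)^(-r * max s 0)) /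
          (Real.pi * Complex.I * (-r : ℤ)))) := by
  rw [factor j r s, oneD j hj r s hr, oneD j hj s (-r) hs,
    int_exp s (max r 0) (min ((2:ℤ)^(-j).toNat + r) ((2:ℤ)^(-j).toNat)),
    int_exp (-r) (max s 0) (min ((2:ℤ)^(-j).toNat + s) ((2:ℤ)^(-j).toNat))]

theorem Nj_inner_products (j r s : ℤ) (hj : j < 0)
    (hr : |r| ≤ 2 ^ (-j).toNat - 1) (hs : |s| ≤ 2 ^ (-j).toNat - 1)
    (hrs : ¬(r = 0 ∧ s = 0)) :
    ((r = 0 ∨ s = 0 ∨ Even r ∨ Even s) → innerNj j r s = 0) ∧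
    (1 ≤ r → 1 ≤ s → Odd r → Odd s →
      innerNj j r s =
        ((((2 : ℝ) ^ (2 * j + 1) / (Real.pi ^ 2 * r * s)) *
          (1 - Real.cos (Real.pi * r * s)) : ℝ) : ℂ)) ∧
    ‖innerNj j r s‖ ≤ (2 : ℝ) ^ (2 * j + 1) / Real.pi := by
  have hM := master j r s hj hr hs
  set L : ℤ := (2:ℤ)^(-j).toNat with hLdef
  have hn1 : 1 ≤ (-j).toNat := by omega
  have hLeven : Even L := by
    obtain ⟨m, hm⟩ : ∃ m, (-j).toNat = m + 1 := ⟨(-j).toNat - 1, by omega⟩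
    exact ⟨2^m, by rw [hLdef, hm, pow_succ]; ring⟩
  have habr := abs_le.mp hr
  have habs := abs_le.mp hs
  have hL0 : (0:ℤ) < L := by positivity
  have hπ : (0:ℝ) < Real.pi := Real.pi_pos
  -- Part 1
  have part1 : (r = 0 ∨ s = 0 ∨ Even r ∨ Even s) → innerNj j r s = 0 := by
    intro h
    by_cases hs0 : s = 0
    · have hr0 : r ≠ 0 := fun h' => hrs ⟨h', hs0⟩
      have hmax : max s 0 = 0 := by omega
      have hmin : min (L + s) L = L := by omega
      have e1 : Even (-r * min (L + s) L) := by
        rw [hmin, Int.even_mul]; right; exact hLeven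
      have e2 : Even (-r * max s 0) := by rw [hmax, mul_zero]; exact Even.zero
      rw [hM, if_neg (by omega : ¬(-r = 0)), Even.neg_one_zpow e1, Even.neg_one_zpow e2]
      simp
    · have hEx0 : Even s ∨ (Even (max r 0) ∧ Even (min (L + r) L)) := by
        rcases h with rfl | h0 | h0 | h0
        · right
          constructor
          · simp
          · rw [Int.even_iff] at hLeven ⊢; omega
        · exact absurd h0 hs0
        · right
          rw [Int.even_iff] at h0 hLeven
          constructor <;> (rw [Int.even_iff]; omega)
        · left; exact h0
      have e1 : Even (s * min (L + r) L) := by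
        rw [Int.even_mul]
        rcases hEx0 with h0 | ⟨_, h0⟩
        · left; exact h0
        · right; exact h0
      have e2 : Even (s * max r 0) := by
        rw [Int.even_mul]
        rcases hEx0 with h0 | ⟨h0, _⟩
        · left; exact h0
        · right; exact h0
      rw [hM, if_neg hs0, Even.neg_one_zpow e1, Even.neg_one_zpow e2]
      simp
  refine ⟨part1, ?_, ?_⟩
  -- Part 2
  · intro hr1 hs1 hor hos
    have hs0 : s ≠ 0 := by omega
    have hr0 : ¬(-r = 0) := by omega
    have hmaxr : max r 0 = r := by omega
    have hminr : min (L + r) L = L := by omega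
    have hmaxs : max s 0 = s := by omega
    have hmins : min (L + s) L = L := by omega
    have e1 : Even (s * L) := by rw [Int.even_mul]; right; exact hLeven
    have e2 : Odd (s * r) := hos.mul hor
    have e3 : Even (-r * L) := by rw [Int.even_mul]; right; exact hLeven
    have e4 : Odd (-r * s) := by
      have := hor.mul hos
      rw [show -r * s = -(r * s) by ring]
      exact this.neg
    rw [hM, if_neg hs0, if_neg hr0, hmaxr, hminr, hmaxs, hmins,
      Even.neg_one_zpow e1, Odd.neg_one_zpow e2, Even.neg_one_zpow e3, Odd.neg_one_zpow e4]
    have hcos : Real.cos (Real.pi * r * s) = -1 := by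
      obtain ⟨t, ht⟩ := hor.mul hos
      have : Real.pi * (r:ℝ) * (s:ℝ) = Real.pi + (t:ℝ) * (2 * Real.pi) := by
        have : ((r * s : ℤ) : ℝ) = ((2 * t + 1 : ℤ) : ℝ) := by rw [ht]
        push_cast at this
        nlinarith [this]
      rw [this, Real.cos_add_int_mul_two_pi, Real.cos_pi]
    rw [hcos]
    have hrne : (r:ℂ) ≠ 0 := by exact_mod_cast (by omega : (r:ℤ) ≠ 0)
    have hsne : (s:ℂ) ≠ 0 := by exact_mod_cast hs0
    have hπne : (Real.pi : ℂ) ≠ 0 := by exact_mod_cast Real.pi_ne_zero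
    push_cast [Complex.ofReal_zpow]
    rw [show (2:ℂ)^(2*j+1) = (2:ℂ)^j * (2:ℂ)^j * 2 by
      rw [show 2*j+1 = j + j + 1 by ring, zpow_add₀ (two_ne_zero), zpow_add₀ (two_ne_zero),
        zpow_one]]
    have hI : Complex.I ≠ 0 := Complex.I_ne_zero
    field_simp
    ring_nf
    simp [Complex.I_sq]
  -- Part 3
  · by_cases hcase : r = 0 ∨ s = 0 ∨ Even r ∨ Even s
    · rw [part1 hcase, norm_zero]
      positivity
    · push_neg at hcase
      obtain ⟨hr0, hs0, hre, hse⟩ := hcase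
      rw [hM, if_neg hs0, if_neg (by omega : ¬(-r = 0))]
      have hnorm2 : ‖(2:ℂ)^j‖ = (2:ℝ)^j := by
        rw [norm_zpow]; norm_num
      have hnum : ∀ m k : ℤ, ‖(-1:ℂ)^m - (-1:ℂ)^k‖ ≤ 2 := by
        intro m k
        calc ‖(-1:ℂ)^m - (-1:ℂ)^k‖ ≤ ‖(-1:ℂ)^m‖ + ‖(-1:ℂ)^k‖ := norm_sub_le _ _
        _ = 2 := by rw [norm_zpow, norm_zpow]; norm_num
      have hden : ∀ c : ℤ, ‖(Real.pi : ℂ) * Complex.I * (c:ℂ)‖ = Real.pi * |(c:ℝ)| := by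
        intro c
        rw [norm_mul, norm_mul, Complex.norm_real, Complex.norm_I, Real.norm_eq_abs,
          abs_of_pos hπ, Complex.norm_intCast]
        ring
      have habs1s : (1:ℝ) ≤ |(s:ℝ)| := by
        have : (1:ℤ) ≤ |s| := Int.one_le_abs hs0
        calc (1:ℝ) ≤ ((|s|:ℤ):ℝ) := by exact_mod_cast this
        _ = |(s:ℝ)| := by push_cast; ring
      have habs1r : (1:ℝ) ≤ |((-r:ℤ):ℝ)| := by
        have : (1:ℤ) ≤ |(-r)| := Int.one_le_abs (by omega)
        calc (1:ℝ) ≤ ((|(-r)|:ℤ):ℝ) := by exact_mod_cast this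
        _ = |((-r:ℤ):ℝ)| := by push_cast; ring
      have hP : (0:ℝ) < (2:ℝ)^j := by positivity
      calc ‖((2:ℂ)^j * (((-1:ℂ)^(s * min (L + r) L) - (-1:ℂ)^(s * max r 0)) /
              (Real.pi * Complex.I * (s:ℤ)))) *
            ((2:ℂ)^j * (((-1:ℂ)^(-r * min (L + s) L) - (-1:ℂ)^(-r * max s 0)) /
              (Real.pi * Complex.I * ((-r:ℤ):ℂ))))‖
          = ((2:ℝ)^j * (‖(-1:ℂ)^(s * min (L + r) L) - (-1:ℂ)^(s * max r 0)‖ /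
              (Real.pi * |(s:ℝ)|))) *
            ((2:ℝ)^j * (‖(-1:ℂ)^(-r * min (L + s) L) - (-1:ℂ)^(-r * max s 0)‖ /
              (Real.pi * |((-r:ℤ):ℝ)|))) := by
            rw [norm_mul, norm_mul, norm_mul, norm_div, norm_div, hnorm2, hden s, hden (-r)]
        _ ≤ ((2:ℝ)^j * (2 / (Real.pi * 1))) * ((2:ℝ)^j * (2 / (Real.pi * 1))) := by
            have hP' := hP.le
            refine mul_le_mul ?_ ?_ (by positivity) (by positivity)
            · exact mul_le_mul_of_nonneg_left
                (div_le_div₀ (by norm_num) (hnum _ _) (by positivity) (by nlinarith)) hP'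
            · exact mul_le_mul_of_nonneg_left
                (div_le_div₀ (by norm_num) (hnum _ _) (by positivity) (by nlinarith)) hP'
        _ = (2:ℝ)^j * (2:ℝ)^j * (4 / Real.pi^2) := by ring
        _ ≤ (2:ℝ)^j * (2:ℝ)^j * (2 / Real.pi) := by
            have key : 4/Real.pi^2 ≤ 2/Real.pi := by
              rw [div_le_div_iff₀ (by positivity) hπ]
              nlinarith [Real.two_le_pi]
            exact mul_le_mul_of_nonneg_left key (by positivity)
        _ = (2:ℝ)^(2*j+1) / Real.pi := by
            rw [show 2*j+1 = j + j + 1 by ring, zpow_add₀ (two_ne_zero), zpow_add₀ (two_ne_zero),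
              zpow_one]
            ring
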